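/- Let K be a field of characteristic zero, let y ∈ K, and let p be an odd prime. Then y is a p-th power in K if and only if y is a p-th power in K(μ_p), where μ_p is the set of p-th roots of unity. -/

import Mathlib

open Polynomial

theorem stmt_5 (K L : Type*) [Field K] [Field L] [CharZero K] [Algebra K L]
    (p : ℕ) (hp : p.Prime) (hodd : p ≠ 2)
    (hcyc : IsCyclotomicExtension {p} K L) (y : K) :
    (∃ z : K, z ^ p = y) ↔ ∃ z : L, z ^ p = algebraMap K L y := by
  constructor
  · rintro ⟨z, rfl⟩
    exact ⟨algebraMap K L z, by rw [← map_pow]⟩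
  · rintro ⟨z, hz⟩
    by_contra hK
    push_neg at hK
    haveI : CharZero L := charZero_of_injective_algebraMap (algebraMap K L).injective
    have hirr : Irreducible (X ^ p - C y) := X_pow_sub_C_irreducible_of_prime hp hK
    haveI := IsCyclotomicExtension.finiteDimensional {p} K L
    have hz0 : Polynomial.aeval z (X ^ p - C y) = 0 := by simp [hz]
    have hmin : minpoly K z = X ^ p - C y :=
      (minpoly.eq_of_irreducible_of_monic hirr hz0 (monic_X_pow_sub_C y hp.ne_zero)).symm
    have hdegz : (minpoly K z).natDegree = p := by
      rw [hmin, natDegree_X_pow_sub_C]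
    have hle : p ≤ Module.finrank K L := hdegz ▸ minpoly.natDegree_le z
    -- upper bound on finrank
    haveI : NeZero p := ⟨hp.ne_zero⟩
    have hζ := IsCyclotomicExtension.zeta_spec p K L
    set ζ := IsCyclotomicExtension.zeta p K L
    have hfr : Module.finrank K L = (minpoly K ζ).natDegree := by
      rw [(hζ.powerBasis K).finrank, IsPrimitiveRoot.powerBasis_dim]
    haveI : NeZero ((p : ℕ) : L) := ⟨by exact_mod_cast Nat.cast_ne_zero.mpr hp.ne_zero⟩
    have hroot : Polynomial.aeval ζ (cyclotomic p K) = 0 := by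
      rw [aeval_def, eval₂_eq_eval_map, map_cyclotomic, ← IsRoot.def]
      exact (isRoot_cyclotomic_iff.mpr (by exact_mod_cast hζ))
    have hdvd : minpoly K ζ ∣ cyclotomic p K := minpoly.dvd K ζ hroot
    have hub : (minpoly K ζ).natDegree ≤ p - 1 := by
      have := natDegree_le_of_dvd hdvd (cyclotomic_ne_zero p K)
      rwa [natDegree_cyclotomic, Nat.totient_prime hp] at this
    rw [hfr] at hle
    have h2 := hp.two_le
    omega
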